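/- Let f(x,y) = Σ_{i=0}^D C(D,i) a_i x^i y^{D-i} with a_i in a field K of characteristic zero, and let c = (c_0,...,c_r) be a nonzero vector in K^{r+1} such that the binary form P_c = Σ_{i=0}^r c_i x^i y^{r-i} is square-free with factorization ∏_{j=1}^r (β_j x − α_j y) over the algebraic closure of K. Then there exist λ_1,...,λ_r in the algebraic closure of K with f(x,y) = Σ_{j=1}^r λ_j (α_j x + β_j y)^D if and only if c lies in the kernel of the Hankel matrix H^r_a with entries (H^r_a)_{i,j} = a_{i+j} of size (D−r+1)×(r+1). -/

import Mathlib

/-- Pad a finite vector to a function on `ℕ` by zeros. -/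
noncomputable def pad {K : Type*} [Zero K] {n : ℕ} (c : Fin n → K) : ℕ → K :=
  fun i => if h : i < n then c ⟨i, h⟩ else 0

/-- The Hankel matrix `H^k_a ∈ K^{(D-k+1)×(k+1)}` with `(i,j)` entry `a_{i+j}`. -/
noncomputable def hankel {K : Type*} [Field K] (a : ℕ → K) (D k : ℕ) :
    Matrix (Fin (D - k + 1)) (Fin (k + 1)) K :=
  fun i j => a (i.1 + j.1)

/-- The binary form `P_v = ∑ v_i x^i y^{n-i}`. -/
noncomputable def binForm (K : Type*) [Field K] (v : ℕ → K) (n : ℕ) :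
    MvPolynomial (Fin 2) K :=
  ∑ i ∈ Finset.range (n + 1),
    MvPolynomial.C (v i) * MvPolynomial.X 0 ^ i * MvPolynomial.X 1 ^ (n - i)

namespace SylvesterAux

open MvPolynomial Finset

variable {L : Type*} [Field L]

lemma coeff_xy (n i k : ℕ) (hi : i ≤ n) :
    MvPolynomial.coeff (Finsupp.single (0 : ℕ) i + Finsupp.single 1 (n - i))
      ((X (0:ℕ) : MvPolynomial (ℕ) L) ^ k * X 1 ^ (n - k))
      = if k = i then 1 else 0 := by
  rw [X_pow_eq_monomial, X_pow_eq_monomial, monomial_mul, one_mul, coeff_monomial]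
  congr 1
  simp only [eq_iff_iff]
  constructor
  · intro h
    have h0 := DFunLike.congr_fun h (0 : ℕ)
    simpa [Finsupp.single_apply] using h0
  · rintro rfl; rfl

lemma coeff_binsum (v : ℕ → L) (n i : ℕ) (hi : i ≤ n) :
    MvPolynomial.coeff (Finsupp.single (0 : ℕ) i + Finsupp.single 1 (n - i))
      (∑ k ∈ Finset.range (n + 1), MvPolynomial.C (v k) * X (0:ℕ) ^ k * X 1 ^ (n - k))
      = v i := by
  rw [MvPolynomial.coeff_sum]
  have : ∀ k ∈ Finset.range (n+1),
      MvPolynomial.coeff (Finsupp.single (0 : ℕ) i + Finsupp.single 1 (n - i))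
        (MvPolynomial.C (v k) * X (0:ℕ) ^ k * X 1 ^ (n - k))
      = if k = i then v k else 0 := by
    intro k hk
    rw [mul_assoc, coeff_C_mul, coeff_xy n i k hi]
    split <;> simp
  rw [Finset.sum_congr rfl this, Finset.sum_ite_eq' (Finset.range (n+1)) i v]
  simp [Nat.lt_succ_iff, hi]

lemma pow_linear (a b : L) (n : ℕ) :
    ((C a * X (0:ℕ) + C b * X 1 : MvPolynomial (ℕ) L)) ^ n
    = ∑ k ∈ Finset.range (n+1),
        C ((n.choose k : L) * (a ^ k * b ^ (n-k))) * X (0:ℕ) ^ k * X 1 ^ (n-k) := by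
  rw [add_pow]
  apply Finset.sum_congr rfl
  intro k _
  rw [mul_pow, mul_pow, map_mul, map_mul, map_pow, map_pow, map_natCast]
  ring

lemma C_mul_pow_linear (lam a b : L) (n : ℕ) :
    C lam * ((C a * X (0:ℕ) + C b * X 1 : MvPolynomial (ℕ) L)) ^ n
    = ∑ k ∈ Finset.range (n+1),
        C ((n.choose k : L) * (lam * (a ^ k * b ^ (n-k)))) * X (0:ℕ) ^ k * X 1 ^ (n-k) := by
  rw [pow_linear, Finset.mul_sum]
  apply Finset.sum_congr rfl
  intro k _
  simp only [map_mul, map_natCast, map_pow]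
  ring

lemma polyId_iff_coeffId [CharZero L] (D r : ℕ) (α β : Fin r → L) (b : ℕ → L)
    (lam : Fin r → L) :
    (∑ i ∈ Finset.range (D+1), C ((D.choose i : L) * b i) * X (0:ℕ) ^ i * X 1 ^ (D-i)
      = ∑ j : Fin r, C (lam j) * (C (α j) * X (0:ℕ) + C (β j) * X 1) ^ D)
    ↔ ∀ i ≤ D, b i = ∑ j : Fin r, lam j * (α j ^ i * β j ^ (D-i)) := by
  constructor
  · intro h i hi
    have hcoeff := congrArg
      (MvPolynomial.coeff (Finsupp.single (0 : ℕ) i + Finsupp.single 1 (D - i))) h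
    rw [coeff_binsum _ D i hi] at hcoeff
    have hR : ∀ j : Fin r,
        MvPolynomial.coeff (Finsupp.single (0 : ℕ) i + Finsupp.single 1 (D - i))
          (C (lam j) * (C (α j) * X (0:ℕ) + C (β j) * X 1) ^ D)
        = (D.choose i : L) * (lam j * (α j ^ i * β j ^ (D-i))) := by
      intro j
      rw [C_mul_pow_linear, coeff_binsum _ D i hi]
    rw [MvPolynomial.coeff_sum, Finset.sum_congr rfl (fun j _ => hR j),
      ← Finset.mul_sum] at hcoeff
    exact mul_left_cancel₀ (Nat.cast_ne_zero.mpr (Nat.choose_pos hi).ne') hcoeff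
  · intro h
    have hR : ∀ j : Fin r, C (lam j) * (C (α j) * X (0:ℕ) + C (β j) * X 1) ^ D
        = ∑ k ∈ Finset.range (D+1),
          C ((D.choose k : L) * (lam j * (α j ^ k * β j ^ (D-k)))) * X (0:ℕ) ^ k
            * X 1 ^ (D-k) := fun j => C_mul_pow_linear _ _ _ _
    rw [Finset.sum_congr rfl (fun j _ => hR j), Finset.sum_comm]
    apply Finset.sum_congr rfl
    intro k hk
    have hk' : k ≤ D := by simpa [Nat.lt_succ_iff] using hk
    rw [h k hk']
    have : ∀ j : Fin r,
        C ((D.choose k : L) * (lam j * (α j ^ k * β j ^ (D-k)))) * X (0:ℕ) ^ k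
          * X 1 ^ (D-k)
        = C ((D.choose k : L) * (lam j * (α j ^ k * β j ^ (D-k))))
          * (X (0:ℕ) ^ k * X 1 ^ (D-k)) := fun j => by ring
    rw [Finset.sum_congr rfl (fun j _ => this j), ← Finset.sum_mul, ← map_sum, ← Finset.mul_sum,
      ← mul_assoc]

lemma vdm_indep [Infinite L] (D r : ℕ) (hrD : r ≤ D) (α β : Fin r → L)
    (hdist : ∀ j j' : Fin r, j ≠ j' → α j * β j' - α j' * β j ≠ 0)
    (hnz : ∀ j, α j ≠ 0 ∨ β j ≠ 0)
    (μ : Fin r → L) (h : ∀ i ≤ D, ∑ j : Fin r, μ j * (α j ^ i * β j ^ (D-i)) = 0) :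
    μ = 0 := by
  classical
  obtain ⟨t, ht⟩ := Infinite.exists_notMem_finset
    (Finset.univ.image (fun j : Fin r => -(β j) / α j))
  set β' : Fin r → L := fun j => β j + t * α j with hβ'def
  have hβ' : ∀ j, β' j ≠ 0 := by
    intro j
    by_cases hα : α j = 0
    · have := hnz j
      simp only [hβ'def, hα, mul_zero, add_zero]
      tauto
    · intro h0
      apply ht
      rw [Finset.mem_image]
      refine ⟨j, Finset.mem_univ j, ?_⟩
      field_simp
      linear_combination -h0
  have h' : ∀ i ≤ D, ∑ j : Fin r, μ j * (α j ^ i * β' j ^ (D-i)) = 0 := by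
    intro i hi
    have expand : ∀ j : Fin r, μ j * (α j ^ i * β' j ^ (D-i))
        = ∑ k ∈ Finset.range (D-i+1),
            ((D-i).choose k : L) * t^(D-i-k) * (μ j * (α j ^ (i+(D-i-k)) * β j ^ k)) := by
      intro j
      rw [show β' j = β j + t * α j from rfl, add_pow, Finset.mul_sum, Finset.mul_sum]
      apply Finset.sum_congr rfl
      intro k _
      rw [mul_pow]
      ring
    rw [Finset.sum_congr rfl (fun j _ => expand j), Finset.sum_comm]
    apply Finset.sum_eq_zero
    intro k hk
    have hk' : k ≤ D - i := by simpa [Nat.lt_succ_iff] using hk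
    have hkD : k = D - (i + (D-i-k)) := by omega
    have hmD : i + (D-i-k) ≤ D := by omega
    calc ∑ j : Fin r, ((D-i).choose k : L) * t^(D-i-k) * (μ j * (α j ^ (i+(D-i-k)) * β j ^ k))
        = ((D-i).choose k : L) * t^(D-i-k)
          * ∑ j : Fin r, μ j * (α j ^ (i+(D-i-k)) * β j ^ (D - (i+(D-i-k)))) := by
          rw [Finset.mul_sum]
          exact Finset.sum_congr rfl fun j _ => by rw [← hkD]
      _ = 0 := by rw [h _ hmD, mul_zero]
  set x : Fin r → L := fun j => α j / β' j with hxdef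
  have hx : ∀ j j' : Fin r, j ≠ j' → x j ≠ x j' := by
    intro j j' hne heq
    rw [hxdef] at heq
    simp only at heq
    rw [div_eq_div_iff (hβ' j) (hβ' j')] at heq
    apply hdist j j' hne
    have : α j * β j' - α j' * β j = α j * β' j' - α j' * β' j := by
      simp only [hβ'def]; ring
    rw [this, heq, sub_self]
  set W : Matrix (Fin r) (Fin r) L := (Matrix.vandermonde x).transpose with hWdef
  have hdet : W.det ≠ 0 := by
    rw [hWdef, Matrix.det_transpose, Matrix.det_vandermonde]
    apply Finset.prod_ne_zero_iff.mpr
    intro i _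
    apply Finset.prod_ne_zero_iff.mpr
    intro j hj
    rw [Finset.mem_Ioi] at hj
    exact sub_ne_zero_of_ne (hx j i (ne_of_gt hj))
  set ν : Fin r → L := fun j => μ j * β' j ^ D with hνdef
  have hWν : W.mulVec ν = 0 := by
    funext i
    have hiD : i.1 ≤ D := le_trans (le_of_lt i.2) hrD
    show ∑ j : Fin r, W i j * ν j = 0
    calc ∑ j : Fin r, W i j * ν j
        = ∑ j : Fin r, μ j * (α j ^ i.1 * β' j ^ (D - i.1)) := by
          apply Finset.sum_congr rfl
          intro j _
          show x j ^ i.1 * (μ j * β' j ^ D) = μ j * (α j ^ i.1 * β' j ^ (D - i.1))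
          have hne : β' j ^ i.1 ≠ 0 := pow_ne_zero _ (hβ' j)
          rw [hxdef]
          simp only []
          rw [div_pow, div_mul_eq_mul_div, div_eq_iff hne]
          conv_lhs => rw [show D = i.1 + (D - i.1) by omega]
          ring
      _ = 0 := h' i.1 hiD
  have hν : ν = 0 := by
    have hW := Matrix.nonsing_inv_mul W (isUnit_iff_ne_zero.mpr hdet)
    calc ν = (W⁻¹ * W).mulVec ν := by rw [hW, Matrix.one_mulVec]
      _ = W⁻¹.mulVec (W.mulVec ν) := by rw [Matrix.mulVec_mulVec]
      _ = 0 := by rw [hWν, Matrix.mulVec_zero]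
  funext j
  have : μ j * β' j ^ D = 0 := by
    have := congrFun hν j
    simpa [hνdef] using this
  have hb := pow_ne_zero D (hβ' j)
  exact (mul_eq_zero.mp this).resolve_right hb

lemma core [Infinite L] (D r : ℕ) (hrD : r ≤ D) (c' : ℕ → L)
    (hc'r : ∀ k, r < k → c' k = 0) (hc' : ∃ k, c' k ≠ 0)
    (α β : Fin r → L)
    (hdist : ∀ j j' : Fin r, j ≠ j' → α j * β j' - α j' * β j ≠ 0)
    (hnz : ∀ j, α j ≠ 0 ∨ β j ≠ 0)
    (b : ℕ → L)
    (hb : ∀ i ≤ D - r, ∑ k ∈ Finset.range (r+1), c' k * b (i+k) = 0)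
    (hV : ∀ j, ∑ k ∈ Finset.range (r+1), c' k * (α j ^ k * β j ^ (r-k)) = 0) :
    ∃ lam : Fin r → L, ∀ i ≤ D, b i = ∑ j : Fin r, lam j * (α j ^ i * β j ^ (D-i)) := by
  classical
  set M : Matrix (Fin (D-r+1)) (Fin (D+1)) L :=
    fun i k => if i.1 ≤ k.1 ∧ k.1 ≤ i.1 + r then c' (k.1 - i.1) else 0 with hMdef
  -- reindexing lemma
  have key : ∀ (i : Fin (D-r+1)) (g : ℕ → L),
      ∑ k : Fin (D+1), M i k * g k.1 = ∑ k ∈ Finset.range (r+1), c' k * g (i.1 + k) := by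
    intro i g
    have hiD : i.1 ≤ D - r := by omega
    have h1 : ∑ k : Fin (D+1), M i k * g k.1
        = ∑ k ∈ Finset.range (D+1),
            (if i.1 ≤ k ∧ k ≤ i.1 + r then c' (k - i.1) else 0) * g k :=
      Fin.sum_univ_eq_sum_range
        (fun k => (if i.1 ≤ k ∧ k ≤ i.1 + r then c' (k - i.1) else 0) * g k) (D+1)
    rw [h1]
    have h2 : ∀ k ∈ Finset.range (D+1),
        (if i.1 ≤ k ∧ k ≤ i.1 + r then c' (k - i.1) else 0) * g k
        = if k ∈ Finset.Ico i.1 (i.1 + r + 1) then c' (k - i.1) * g k else 0 := by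
      intro k _
      by_cases h : i.1 ≤ k ∧ k ≤ i.1 + r
      · rw [if_pos h, if_pos (Finset.mem_Ico.mpr ⟨h.1, by omega⟩)]
      · rw [if_neg h, if_neg (fun hmem => h (by have := Finset.mem_Ico.mp hmem; omega)), zero_mul]
    rw [Finset.sum_congr rfl h2, Finset.sum_ite_mem,
      (by ext k; simp [Finset.mem_Ico]; omega :
        Finset.range (D+1) ∩ Finset.Ico i.1 (i.1 + r + 1) = Finset.Ico i.1 (i.1 + r + 1)),
      Finset.sum_Ico_eq_sum_range]
    simp only [Nat.add_sub_cancel_left]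
    rw [show i.1 + r + 1 - i.1 = r + 1 by omega]
  set b' : Fin (D+1) → L := fun i => b i.1 with hb'def
  have hbker : M.mulVec b' = 0 := by
    funext i
    show ∑ k : Fin (D+1), M i k * b k.1 = 0
    rw [key i b]
    exact hb i.1 (by omega)
  set N : Matrix (Fin (D+1)) (Fin r) L := fun i j => α j ^ i.1 * β j ^ (D - i.1) with hNdef
  have hMN : M * N = 0 := by
    ext i j
    show ∑ k : Fin (D+1), M i k * (α j ^ k.1 * β j ^ (D - k.1)) = 0
    rw [key i (fun m => α j ^ m * β j ^ (D - m))]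
    have : ∀ k ∈ Finset.range (r+1),
        c' k * (α j ^ (i.1 + k) * β j ^ (D - (i.1 + k)))
        = (α j ^ i.1 * β j ^ (D - r - i.1)) * (c' k * (α j ^ k * β j ^ (r-k))) := by
      intro k hk
      have hk' : k ≤ r := by simpa [Nat.lt_succ_iff] using hk
      have hiD : i.1 ≤ D - r := by omega
      rw [pow_add, show D - (i.1 + k) = (D - r - i.1) + (r - k) by omega, pow_add]
      ring
    rw [Finset.sum_congr rfl this, ← Finset.mul_sum, hV j, mul_zero]
  -- surjectivity of M.mulVec
  set s := Nat.findGreatest (fun k => c' k ≠ 0) r with hsdef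
  have hs_le : s ≤ r := Nat.findGreatest_le r
  have hs : c' s ≠ 0 := by
    obtain ⟨k0, hk0⟩ := hc'
    have hk0r : k0 ≤ r := by by_contra hh; exact hk0 (hc'r k0 (by omega))
    exact Nat.findGreatest_spec (P := fun k => c' k ≠ 0) hk0r hk0
  have hmax : ∀ k, s < k → c' k = 0 := by
    intro k hsk
    by_cases hkr : k ≤ r
    · by_contra hne
      exact Nat.findGreatest_is_greatest hsk hkr hne
    · exact hc'r k (by omega)
  set M' : Matrix (Fin (D-r+1)) (Fin (D-r+1)) L :=
    fun i l => M i ⟨s + l.1, by have := l.2; omega⟩ with hM'def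
  have htri : M'.BlockTriangular OrderDual.toDual := by
    intro i l hil
    have hil' : i.1 < l.1 := hil
    show (if i.1 ≤ s + l.1 ∧ s + l.1 ≤ i.1 + r then c' (s + l.1 - i.1) else 0) = 0
    split
    · exact hmax _ (by omega)
    · rfl
  have hdiag : ∀ i : Fin (D-r+1), M' i i = c' s := by
    intro i
    show (if i.1 ≤ s + i.1 ∧ s + i.1 ≤ i.1 + r then c' (s + i.1 - i.1) else 0) = c' s
    rw [if_pos ⟨by omega, by omega⟩]
    congr 1
    omega
  have hdet : M'.det ≠ 0 := by
    rw [Matrix.det_of_lowerTriangular M' htri]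
    exact Finset.prod_ne_zero_iff.mpr (fun i _ => by rw [hdiag]; exact hs)
  have hsurj : Function.Surjective (Matrix.mulVecLin M) := by
    intro w
    set x : Fin (D-r+1) → L := M'⁻¹.mulVec w with hxdef
    have hx : M'.mulVec x = w := by
      rw [hxdef, Matrix.mulVec_mulVec, Matrix.mul_nonsing_inv M' (isUnit_iff_ne_zero.mpr hdet),
        Matrix.one_mulVec]
    set e : Fin (D-r+1) → Fin (D+1) := fun l => ⟨s + l.1, by have := l.2; omega⟩ with hedef
    have he : Function.Injective e := by
      intro l l' hll
      have : s + l.1 = s + l'.1 := congrArg Fin.val hll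
      exact Fin.ext (by omega)
    set v : Fin (D+1) → L :=
      fun k => if h : s ≤ k.1 ∧ k.1 ≤ s + (D - r) then x ⟨k.1 - s, by omega⟩ else 0 with hvdef
    refine ⟨v, ?_⟩
    rw [Matrix.mulVecLin_apply]
    funext i
    show ∑ k : Fin (D+1), M i k * v k = w i
    have hsupp : ∀ k ∈ Finset.univ, k ∉ Finset.univ.image e → M i k * v k = 0 := by
      intro k _ hk
      have : v k = 0 := by
        simp only [hvdef]
        split
        · next h =>
          exfalso
          apply hk
          rw [Finset.mem_image]
          exact ⟨⟨k.1 - s, by omega⟩, Finset.mem_univ _, Fin.ext (by simp [hedef]; omega)⟩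
        · rfl
      rw [this, mul_zero]
    rw [← Finset.sum_subset (Finset.subset_univ _) hsupp, Finset.sum_image (fun a _ b _ h => he h)]
    have : ∀ l : Fin (D-r+1), M i (e l) * v (e l) = M' i l * x l := by
      intro l
      have hl := l.2
      congr 1
      simp only [hvdef, hedef]
      rw [dif_pos ⟨by omega, by omega⟩]
      apply congrArg x
      apply Fin.ext
      simp
    rw [Finset.sum_congr rfl (fun l _ => this l)]
    exact congrFun hx i
  -- dimension count
  have hrange : LinearMap.range (Matrix.mulVecLin M) = ⊤ := LinearMap.range_eq_top.mpr hsurj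
  have hrn := LinearMap.finrank_range_add_finrank_ker (Matrix.mulVecLin M)
  rw [hrange, finrank_top] at hrn
  have hdim1 : Module.finrank L (Fin (D-r+1) → L) = D - r + 1 := by
    rw [Module.finrank_pi]; simp
  have hdim2 : Module.finrank L (Fin (D+1) → L) = D + 1 := by
    rw [Module.finrank_pi]; simp
  have hker_rank : Module.finrank L (LinearMap.ker (Matrix.mulVecLin M)) = r := by omega
  -- the span
  have hUinj : Function.Injective (Matrix.mulVecLin N) := by
    rw [← LinearMap.ker_eq_bot]
    rw [Submodule.eq_bot_iff]
    intro μ hμ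
    rw [LinearMap.mem_ker, Matrix.mulVecLin_apply] at hμ
    apply vdm_indep D r hrD α β hdist hnz
    intro i hi
    have := congrFun hμ ⟨i, by omega⟩
    simp only [Matrix.mulVec, dotProduct, Pi.zero_apply] at this
    rw [← this]
    exact Finset.sum_congr rfl (fun j _ => by rw [hNdef]; ring)
  have hle : LinearMap.range (Matrix.mulVecLin N) ≤ LinearMap.ker (Matrix.mulVecLin M) := by
    rintro _ ⟨μ, rfl⟩
    rw [LinearMap.mem_ker]
    simp only [Matrix.mulVecLin_apply]
    rw [Matrix.mulVec_mulVec, hMN, Matrix.zero_mulVec]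
  have heq : LinearMap.range (Matrix.mulVecLin N) = LinearMap.ker (Matrix.mulVecLin M) := by
    apply Submodule.eq_of_le_of_finrank_le hle
    rw [hker_rank, LinearMap.finrank_range_of_inj hUinj, Module.finrank_pi]
    simp
  have hbmem : b' ∈ LinearMap.range (Matrix.mulVecLin N) := by
    rw [heq, LinearMap.mem_ker, Matrix.mulVecLin_apply, hbker]
  obtain ⟨μ, hμ⟩ := hbmem
  refine ⟨μ, fun i hi => ?_⟩
  have := congrFun hμ ⟨i, by omega⟩
  rw [Matrix.mulVecLin_apply] at this
  simp only [Matrix.mulVec, dotProduct] at this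
  rw [hb'def] at this
  simp only at this
  rw [← this]
  exact Finset.sum_congr rfl (fun j _ => by rw [hNdef]; ring)

lemma lin_not_unit (a b : L) : ¬ IsUnit (C b * X (0:Fin 2) - C a * X 1 : MvPolynomial (Fin 2) L) := by
  intro h
  obtain ⟨q, hq⟩ := IsUnit.exists_right_inv h
  have := congrArg (MvPolynomial.eval ![a, b]) hq
  simp only [map_mul, map_sub, eval_C, eval_X, map_one] at this
  rw [show (![a,b] : Fin 2 → L) 0 = a from rfl, show (![a,b] : Fin 2 → L) 1 = b from rfl] at this
  rw [show b * a - a * b = 0 by ring, zero_mul] at this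
  exact zero_ne_one this



end SylvesterAux

open SylvesterAux MvPolynomial in
/-- Sylvester's theorem. -/
theorem stmt0 {K : Type*} [Field K] [CharZero K] (D r : ℕ) (hr : 1 ≤ r) (hrD : r ≤ D)
    (a : ℕ → K) (c : Fin (r + 1) → K) (hc : c ≠ 0)
    (α β : Fin r → AlgebraicClosure K)
    (hfact : binForm (AlgebraicClosure K)
        (pad fun i => algebraMap K (AlgebraicClosure K) (c i)) r
      = ∏ j : Fin r,
          (MvPolynomial.C (β j) * MvPolynomial.X 0 - MvPolynomial.C (α j) * MvPolynomial.X 1))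
    (hsf : Squarefree (binForm (AlgebraicClosure K)
        (pad fun i => algebraMap K (AlgebraicClosure K) (c i)) r)) :
    (∃ lam : Fin r → AlgebraicClosure K,
      MvPolynomial.map (algebraMap K (AlgebraicClosure K))
          (∑ i ∈ Finset.range (D + 1),
            MvPolynomial.C ((D.choose i : K) * a i) * MvPolynomial.X 0 ^ i *
              MvPolynomial.X 1 ^ (D - i))
        = ∑ j : Fin r, MvPolynomial.C (lam j) *
            (MvPolynomial.C (α j) * MvPolynomial.X 0 +
              MvPolynomial.C (β j) * MvPolynomial.X 1) ^ D)
    ↔ (hankel a D r).mulVec c = 0 := by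
  classical
  letI : CharZero (AlgebraicClosure K) :=
    charZero_of_injective_algebraMap (algebraMap K (AlgebraicClosure K)).injective
  set φ := algebraMap K (AlgebraicClosure K) with hφdef
  set cbar : ℕ → AlgebraicClosure K := pad fun i => φ (c i) with hcbar
  set bL : ℕ → AlgebraicClosure K := fun n => φ (a n) with hbLdef
  set ℓ : Fin r → MvPolynomial (Fin 2) (AlgebraicClosure K) :=
    fun m => C (β m) * X 0 - C (α m) * X 1 with hℓdef
  have hP0 : binForm (AlgebraicClosure K) cbar r ≠ 0 := hsf.ne_zero
  have hnz : ∀ j, α j ≠ 0 ∨ β j ≠ 0 := by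
    intro j
    by_contra hcon
    push_neg at hcon
    apply hP0
    rw [hfact]
    apply Finset.prod_eq_zero (Finset.mem_univ j)
    rw [hcon.1, hcon.2]
    simp
  have hdist : ∀ j j' : Fin r, j ≠ j' → α j * β j' - α j' * β j ≠ 0 := by
    intro j j' hne h0
    have h0' : α j * β j' = α j' * β j := sub_eq_zero.mp h0
    obtain ⟨u, hu⟩ : ∃ u : AlgebraicClosure K, ℓ j' = C u * ℓ j := by
      rcases hnz j with hα | hβ
      · refine ⟨α j' / α j, ?_⟩
        have h1 : α j' / α j * β j = β j' := by
          field_simp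
          linear_combination -h0'
        have h2 : α j' / α j * α j = α j' := div_mul_cancel₀ _ hα
        simp only [hℓdef]
        rw [mul_sub, ← mul_assoc, ← mul_assoc, ← map_mul, ← map_mul, h1, h2]
      · refine ⟨β j' / β j, ?_⟩
        have h1 : β j' / β j * β j = β j' := div_mul_cancel₀ _ hβ
        have h2 : β j' / β j * α j = α j' := by
          field_simp
          linear_combination h0'
        simp only [hℓdef]
        rw [mul_sub, ← mul_assoc, ← mul_assoc, ← map_mul, ← map_mul, h1, h2]
    have hdvd : ℓ j * ℓ j ∣ binForm (AlgebraicClosure K) cbar r := by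
      obtain ⟨Q, hQ⟩ := Finset.dvd_prod_of_mem ℓ (Finset.mem_erase.mpr ⟨hne, Finset.mem_univ j⟩)
      refine ⟨C u * Q, ?_⟩
      rw [hfact, ← Finset.mul_prod_erase Finset.univ ℓ (Finset.mem_univ j'), hQ, hu]
      ring
    exact lin_not_unit (α j) (β j) (hsf _ hdvd)
  have hV : ∀ j, ∑ k ∈ Finset.range (r+1), cbar k * (α j ^ k * β j ^ (r-k)) = 0 := by
    intro j
    have h1 := congrArg (MvPolynomial.eval ![α j, β j]) hfact
    rw [binForm] at h1
    simp only [map_sum, map_prod, map_mul, map_sub, map_pow, eval_C, eval_X,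
      Matrix.cons_val_zero, Matrix.cons_val_one, Matrix.head_cons, hℓdef] at h1
    rw [Finset.prod_eq_zero (Finset.mem_univ j)
      (by rw [show β j * α j - α j * β j = 0 by ring] :
        β j * α j - α j * β j = 0)] at h1
    rw [← h1]
    exact Finset.sum_congr rfl (fun k _ => by ring)
  have hSK : ∀ i : ℕ, φ (∑ k : Fin (r+1), a (i + k.1) * c k)
      = ∑ k ∈ Finset.range (r+1), cbar k * bL (i + k) := by
    intro i
    rw [map_sum, ← Fin.sum_univ_eq_sum_range (fun k => cbar k * bL (i + k)) (r+1)]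
    apply Finset.sum_congr rfl
    intro k _
    rw [map_mul]
    have hck : cbar k.1 = φ (c k) := by
      simp only [hcbar, pad]
      rw [dif_pos k.2]
    rw [hck]
    exact mul_comm _ _
  constructor
  · rintro ⟨lam, hlam⟩
    have hmap : MvPolynomial.map φ
        (∑ i ∈ Finset.range (D + 1), C ((D.choose i : K) * a i) * X 0 ^ i * X 1 ^ (D - i))
        = ∑ i ∈ Finset.range (D+1),
            C ((D.choose i : AlgebraicClosure K) * bL i) * X (0:ℕ) ^ i * X 1 ^ (D-i) := by
      rw [map_sum]
      apply Finset.sum_congr rfl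
      intro i _
      simp only [map_mul, map_pow, MvPolynomial.map_C, MvPolynomial.map_X, map_natCast]
      rfl
    have hco := (polyId_iff_coeffId D r α β bL lam).mp (hmap.symm.trans hlam)
    have hzero : ∀ i ≤ D - r, ∑ k ∈ Finset.range (r+1), cbar k * bL (i + k) = 0 := by
      intro i hi
      have step : ∀ k ∈ Finset.range (r+1), cbar k * bL (i+k)
          = ∑ j : Fin r,
              (lam j * (α j ^ i * β j ^ (D-r-i))) * (cbar k * (α j ^ k * β j ^ (r-k))) := by
        intro k hk
        have hk' : k ≤ r := by simpa [Nat.lt_succ_iff] using hk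
        rw [hco (i+k) (by omega), Finset.mul_sum]
        apply Finset.sum_congr rfl
        intro j _
        rw [pow_add, show D - (i+k) = (D-r-i) + (r-k) by omega, pow_add]
        ring
      rw [Finset.sum_congr rfl step, Finset.sum_comm]
      apply Finset.sum_eq_zero
      intro j _
      rw [← Finset.mul_sum, hV j, mul_zero]
    funext i
    have hentry : (hankel a D r).mulVec c i = ∑ k : Fin (r+1), a (i.1 + k.1) * c k := rfl
    apply (algebraMap K (AlgebraicClosure K)).injective
    rw [Pi.zero_apply, map_zero, hentry, ← hφdef, hSK i.1]
    exact hzero i.1 (by have := i.2; omega)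
  · intro hH0
    have hbL : ∀ i ≤ D - r, ∑ k ∈ Finset.range (r+1), cbar k * bL (i+k) = 0 := by
      intro i hi
      rw [← hSK i]
      have h2 : (∑ k : Fin (r+1), a (i + k.1) * c k) = 0 := by
        have h3 := congrFun hH0 ⟨i, by omega⟩
        simpa [Matrix.mulVec, dotProduct, hankel] using h3
      rw [h2, map_zero]
    have hc'r : ∀ k, r < k → cbar k = 0 := by
      intro k hk
      simp only [hcbar, pad]
      rw [dif_neg (by omega)]
    have hc'ne : ∃ k, cbar k ≠ 0 := by
      obtain ⟨k0, hk0⟩ := Function.ne_iff.mp hc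
      simp only [Pi.zero_apply] at hk0
      refine ⟨k0.1, ?_⟩
      have : cbar k0.1 = φ (c k0) := by
        simp only [hcbar, pad]
        rw [dif_pos k0.2]
      rw [this]
      intro hzero
      exact hk0 (φ.injective (by rw [hzero, map_zero]))
    obtain ⟨lam, hlam⟩ := core D r hrD cbar hc'r hc'ne α β hdist hnz bL hbL hV
    refine ⟨lam, ?_⟩
    have hmap : MvPolynomial.map φ
        (∑ i ∈ Finset.range (D + 1), C ((D.choose i : K) * a i) * X 0 ^ i * X 1 ^ (D - i))
        = ∑ i ∈ Finset.range (D+1),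
            C ((D.choose i : AlgebraicClosure K) * bL i) * X (0:ℕ) ^ i * X 1 ^ (D-i) := by
      rw [map_sum]
      apply Finset.sum_congr rfl
      intro i _
      simp only [map_mul, map_pow, MvPolynomial.map_C, MvPolynomial.map_X, map_natCast]
      rfl
    exact hmap.trans ((polyId_iff_coeffId D r α β bL lam).mpr hlam)
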